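/- If t⁰ is not a global minimizer of ψ, then ψ̃(t*; t⁰) < ψ̃(t⁰; t⁰). -/

import Mathlib

noncomputable def taylor2 {n : ℕ} (l : (Fin n → ℝ) → ℝ) (t0 t : Fin n → ℝ) : ℝ :=
  l t0 + fderiv ℝ l t0 (t - t0)
    + (1 / 2) * fderiv ℝ (fun x => fderiv ℝ l x) t0 (t - t0) (t - t0)


lemma dir_deriv {n : ℕ} {l : (Fin n → ℝ) → ℝ} (hl : Differentiable ℝ l)
    (t0 d : Fin n → ℝ) :
    HasDerivAt (fun s : ℝ => l (t0 + s • d)) (fderiv ℝ l t0 d) 0 := by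
  have h1 : HasDerivAt (fun s : ℝ => t0 + s • d) d 0 := by
    simpa using ((hasDerivAt_id (0:ℝ)).smul_const d).const_add t0
  have h2 : HasFDerivAt l (fderiv ℝ l t0) (t0 + (0:ℝ) • d) := by
    simpa using (hl t0).hasFDerivAt
  exact h2.comp_hasDerivAt (0:ℝ) h1

lemma grad_ineq {n : ℕ} {l : (Fin n → ℝ) → ℝ} (hl : Differentiable ℝ l)
    (hc : ConvexOn ℝ Set.univ l) (t0 t : Fin n → ℝ) :
    l t0 + fderiv ℝ l t0 (t - t0) ≤ l t := by
  set d := t - t0 with hd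
  have hφ := dir_deriv hl t0 d
  have hslope := hasDerivAt_iff_tendsto_slope.mp hφ
  have hslope' : Filter.Tendsto (slope (fun s : ℝ => l (t0 + s • d)) 0) (nhdsWithin 0 (Set.Ioi 0))
      (nhds (fderiv ℝ l t0 d)) :=
    hslope.mono_left (nhdsWithin_mono _ (fun x hx => ne_of_gt hx))
  have hev : ∀ᶠ s in nhdsWithin (0:ℝ) (Set.Ioi 0),
      slope (fun s : ℝ => l (t0 + s • d)) 0 s ≤ l t - l t0 := by
    filter_upwards [Ioo_mem_nhdsGT_of_mem (by norm_num : (0:ℝ) ∈ Set.Ico (0:ℝ) 1)] with s hs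
    have hs0 : 0 < s := hs.1
    have hs1 : s < 1 := hs.2
    have hpt : t0 + s • d = (1 - s) • t0 + s • t := by
      rw [hd]; module
    have hcv := hc.2 (Set.mem_univ t0) (Set.mem_univ t) (by linarith : (0:ℝ) ≤ 1 - s)
      (le_of_lt hs0) (by ring)
    rw [slope_def_field]
    simp only [sub_zero, zero_smul, add_zero, smul_eq_mul] at *
    rw [div_le_iff₀ hs0]
    rw [hpt]
    nlinarith [hcv]
  have := le_of_tendsto hslope' hev
  linarith

/-- if `t⁰` is not a global minimizer of `ψ = l + P`, then
`ψ̃(t*; t⁰) < ψ̃(t⁰; t⁰)`, where `t*` is a global minimizer of the surrogate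
`ψ̃(·; t⁰) = l̃(·; t⁰) + P`. -/
theorem stmt4 {n : ℕ} (l P : (Fin n → ℝ) → ℝ)
    (hl_smooth : ContDiff ℝ 2 l) (hl_conv : ConvexOn ℝ Set.univ l)
    (hP_conv : ConvexOn ℝ Set.univ P)
    (t0 tstar : Fin n → ℝ)
    (ψ : (Fin n → ℝ) → ℝ) (hψ : ∀ t, ψ t = l t + P t)
    (ψt : (Fin n → ℝ) → ℝ) (hψt : ∀ t, ψt t = taylor2 l t0 t + P t)
    (htstar : ∀ t, ψt tstar ≤ ψt t)
    (hnotmin : ¬ ∀ t, ψ t0 ≤ ψ t) :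
    ψt tstar < ψt t0 := by
  have hl : Differentiable ℝ l := hl_smooth.differentiable (by norm_num)
  by_contra hcon
  push_neg at hcon
  have hmin : ∀ t, ψt t0 ≤ ψt t := fun t => le_trans hcon (htstar t)
  apply hnotmin
  intro t
  set d := t - t0 with hd
  set g := fderiv ℝ l t0 with hg
  set H := fderiv ℝ (fun x => fderiv ℝ l x) t0 with hH
  -- key: P t0 ≤ g d + P t
  have hkey : P t0 ≤ g d + P t := by
    have hev : ∀ᶠ s in nhdsWithin (0:ℝ) (Set.Ioi 0),
        P t0 ≤ g d + (s/2) * H d d + P t := by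
      filter_upwards [Ioo_mem_nhdsGT_of_mem (by norm_num : (0:ℝ) ∈ Set.Ico (0:ℝ) 1)] with s hs
      have hs0 : 0 < s := hs.1
      have hs1 : s < 1 := hs.2
      have h1 := hmin (t0 + s • d)
      rw [hψt, hψt] at h1
      have ht0 : taylor2 l t0 t0 = l t0 := by
        simp [taylor2]
      have hts : taylor2 l t0 (t0 + s • d)
          = l t0 + s * g d + (1/2) * (s * (s * H d d)) := by
        have : t0 + s • d - t0 = s • d := by abel
        rw [taylor2, this, ← hg, ← hH]
        rw [map_smul, map_smul]
        simp only [ContinuousLinearMap.smul_apply, map_smul, smul_eq_mul]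
      have hpt : t0 + s • d = (1 - s) • t0 + s • t := by
        rw [hd]; module
      have hPcv : P (t0 + s • d) ≤ (1 - s) * P t0 + s * P t := by
        rw [hpt]
        exact hP_conv.2 (Set.mem_univ t0) (Set.mem_univ t) (by linarith) (le_of_lt hs0) (by ring)
      rw [ht0, hts] at h1
      have h2 : s * P t0 ≤ s * (g d + (s/2) * H d d + P t) := by nlinarith
      have := le_of_mul_le_mul_left (by linarith [h2] : s * P t0 ≤ s * (g d + (s/2) * H d d + P t)) hs0
      linarith
    have htend : Filter.Tendsto (fun s : ℝ => g d + (s/2) * H d d + P t)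
        (nhdsWithin 0 (Set.Ioi 0)) (nhds (g d + P t)) := by
      have : Continuous (fun s : ℝ => g d + (s/2) * H d d + P t) :=
        (continuous_const.add ((continuous_id.div_const 2).mul continuous_const)).add
          continuous_const
      have h := (this.tendsto 0).mono_left (nhdsWithin_le_nhds (s := Set.Ioi (0:ℝ)))
      simpa using h
    exact ge_of_tendsto htend hev
  have hgrad := grad_ineq hl hl_conv t0 t
  rw [hψ, hψ]
  rw [← hg, ← hd] at hgrad
  linarith
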